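/- For every natural number n, a₂(2n) = 2·a₁(n). -/

import Mathlib

open Polynomial

/-- `a₁ n` : number of nonzero coefficients of `(1+x+x²)ⁿ` over `𝔽₂`. -/
noncomputable def a1 (n : ℕ) : ℕ :=
  (((1 + X + X ^ 2 : (ZMod 2)[X]) ^ n).support).card

/-- `a₂ n` : number of nonzero coefficients of `(1+x)(1+x+x²)ⁿ` over `𝔽₂`. -/
noncomputable def a2 (n : ℕ) : ℕ :=
  (((1 + X) * (1 + X + X ^ 2 : (ZMod 2)[X]) ^ n).support).card

theorem a2_two_mul (n : ℕ) : a2 (2 * n) = 2 * a1 n := by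
  classical
  set Q : (ZMod 2)[X] := (1 + X + X ^ 2) ^ n with hQ
  have hexp : expand (ZMod 2) 2 Q = Q ^ 2 := by
    have h := Polynomial.map_frobenius_expand (p := 2) Q
    rwa [ZMod.frobenius_zmod, Polynomial.map_id] at h
  have hpoly : (1 + X + X ^ 2 : (ZMod 2)[X]) ^ (2 * n) = expand (ZMod 2) 2 Q := by
    rw [hexp, hQ, ← pow_mul, mul_comm]
  set P : (ZMod 2)[X] := expand (ZMod 2) 2 Q with hP
  have hco : ∀ m, ((1 + X) * P).coeff m = P.coeff m + (X * P).coeff m := by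
    intro m
    rw [add_mul, one_mul, coeff_add]
  have hceven : ∀ k, ((1 + X) * P).coeff (2 * k) = Q.coeff k := by
    intro k
    rw [hco]
    rcases Nat.eq_zero_or_pos k with rfl | hk
    · simp [hP, coeff_expand, mul_comm]
    · have h2k : 2 * k = (2 * k - 1) + 1 := by omega
      rw [h2k, coeff_X_mul, ← h2k]
      have hodd : ¬ (2 ∣ (2 * k - 1)) := by omega
      rw [hP, coeff_expand (by norm_num), coeff_expand (by norm_num),
        if_pos (dvd_mul_right 2 k), if_neg hodd, Nat.mul_div_cancel_left k (by norm_num),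
        add_zero]
  have hcodd : ∀ k, ((1 + X) * P).coeff (2 * k + 1) = Q.coeff k := by
    intro k
    rw [hco, coeff_X_mul]
    have hodd : ¬ (2 ∣ (2 * k + 1)) := by omega
    rw [hP, coeff_expand (by norm_num), coeff_expand (by norm_num),
      if_neg hodd, if_pos (dvd_mul_right 2 k), Nat.mul_div_cancel_left k (by norm_num),
      zero_add]
  have hsupp : ((1 + X) * P).support
      = Q.support.image (fun k => 2 * k) ∪ Q.support.image (fun k => 2 * k + 1) := by
    ext m
    simp only [Finset.mem_union, Finset.mem_image, Polynomial.mem_support_iff]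
    rcases Nat.even_or_odd m with ⟨k, hk⟩ | ⟨k, hk⟩
    · rw [show m = 2 * k by omega, hceven k]
      constructor
      · intro h; exact Or.inl ⟨k, h, by omega⟩
      · rintro (⟨j, hj, hj2⟩ | ⟨j, hj, hj2⟩)
        · have : j = k := by omega
          subst this; exact hj
        · omega
    · rw [show m = 2 * k + 1 by omega, hcodd k]
      constructor
      · intro h; exact Or.inr ⟨k, h, by omega⟩
      · rintro (⟨j, hj, hj2⟩ | ⟨j, hj, hj2⟩)
        · omega
        · have : j = k := by omega
          subst this; exact hj
  unfold a2 a1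
  rw [hpoly, hsupp, Finset.card_union_of_disjoint, Finset.card_image_of_injective,
    Finset.card_image_of_injective, two_mul]
  · intro a b hab; simp only at hab; omega
  · intro a b hab; simp only at hab; omega
  · rw [Finset.disjoint_left]
    intro x hx1 hx2
    simp only [Finset.mem_image] at hx1 hx2
    obtain ⟨j, _, rfl⟩ := hx1
    obtain ⟨i, _, hi⟩ := hx2
    omega
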